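/- arXiv:1912.03512 — 2 statements merged into one kernel-verified Lean document; each statement's English description precedes it below -/
import Mathlib

section
/- (Ambrosetti–Rabinowitz-type inequality from homogeneity of the derivative.) Let l > 0 be a real number and let g : [0, ∞) → ℝ be continuous with g(0) = 0 and differentiable on (0, ∞), such that the map t ↦ g′(t)/t^l is nondecreasing on (0, ∞). Then t g′(t) ≥ (l + 1) g(t) for all t > 0. -/
/-- Ambrosetti–Rabinowitz-type inequality from homogeneity of the derivative:
if `g` is continuous on `[0,∞)` with `g 0 = 0`, differentiable on `(0,∞)` with
derivative `g'`, and `t ↦ g'(t)/t^l` is nondecreasing on `(0,∞)`, then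
`t g'(t) ≥ (l+1) g(t)` for all `t > 0`. -/
theorem ambrosetti_rabinowitz_of_monotone_deriv
    (l : ℝ) (hl : 0 < l) (g g' : ℝ → ℝ)
    (hcont : ContinuousOn g (Set.Ici 0)) (hg0 : g 0 = 0)
    (hderiv : ∀ t : ℝ, 0 < t → HasDerivAt g (g' t) t)
    (hmono : ∀ s t : ℝ, 0 < s → s ≤ t → g' s / s ^ l ≤ g' t / t ^ l) :
    ∀ t : ℝ, 0 < t → (l + 1) * g t ≤ t * g' t := by
  intro t ht
  set c : ℝ := g' t / t ^ l with hc
  have hl1 : (0:ℝ) < l + 1 := by linarith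
  set h : ℝ → ℝ := fun s => g s - c / (l + 1) * s ^ (l + 1) with hh
  -- derivative of h on (0, t)
  have hderivh : ∀ x : ℝ, 0 < x → HasDerivAt h (g' x - c * x ^ l) x := by
    intro x hx
    have h1 : HasDerivAt (fun s : ℝ => s ^ (l + 1)) ((l + 1) * x ^ (l + 1 - 1)) x :=
      Real.hasDerivAt_rpow_const (Or.inl hx.ne')
    have h2 : HasDerivAt (fun s : ℝ => c / (l + 1) * s ^ (l + 1))
        (c / (l + 1) * ((l + 1) * x ^ (l + 1 - 1))) x := h1.const_mul _
    have := (hderiv x hx).sub h2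
    convert this using 1
    · rfl
    · rfl
    · rfl
    rw [add_sub_cancel_right, ← mul_assoc, div_mul_cancel₀ _ hl1.ne']
  have hint : interior (Set.Icc (0:ℝ) t) = Set.Ioo 0 t := interior_Icc
  have hconth : ContinuousOn h (Set.Icc 0 t) := by
    apply ContinuousOn.sub
    · exact hcont.mono (fun x hx => hx.1)
    · exact continuousOn_const.mul (fun x hx =>
        (Real.continuousAt_rpow_const x (l + 1) (Or.inr hl1.le)).continuousWithinAt)
  have hanti : AntitoneOn h (Set.Icc 0 t) := by
    apply antitoneOn_of_deriv_nonpos (convex_Icc 0 t) hconth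
    · intro x hx
      rw [hint] at hx
      exact (hderivh x hx.1).differentiableAt.differentiableWithinAt
    · intro x hx
      rw [hint] at hx
      rw [(hderivh x hx.1).deriv]
      have hxl : (0:ℝ) < x ^ l := Real.rpow_pos_of_pos hx.1 l
      have := hmono x t hx.1 hx.2.le
      have : g' x ≤ c * x ^ l := by
        rw [hc]
        calc g' x = g' x / x ^ l * x ^ l := by field_simp
        _ ≤ g' t / t ^ l * x ^ l := by
            exact mul_le_mul_of_nonneg_right this hxl.le
      linarith
  have key := hanti (Set.left_mem_Icc.mpr ht.le) (Set.right_mem_Icc.mpr ht.le) ht.le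
  have h0 : h 0 = 0 := by
    simp [hh, hg0, Real.zero_rpow hl1.ne']
  rw [h0] at key
  -- key : g t - c / (l+1) * t^(l+1) ≤ 0
  have htl : (0:ℝ) < t ^ l := Real.rpow_pos_of_pos ht l
  have htpow : t ^ (l + 1) = t ^ l * t := by
    rw [Real.rpow_add ht, Real.rpow_one]
  have : g t ≤ c / (l + 1) * t ^ (l + 1) := by
    simpa [hh] using key
  have hct : c * t ^ (l + 1) = t * g' t := by
    rw [hc, htpow]; field_simp
  calc (l + 1) * g t ≤ (l + 1) * (c / (l + 1) * t ^ (l + 1)) := by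
        exact mul_le_mul_of_nonneg_left this hl1.le
  _ = c * t ^ (l + 1) := by field_simp
  _ = t * g' t := hct
end

section
/- Let n ≥ 1 be an integer and let F : ℝ² → ℝ be continuously differentiable and nonnegative, satisfying t ∂F/∂t(t, s) ≥ n F(t, s) and s ∂F/∂s(t, s) ≥ n F(t, s) for all t, s > 0. Then for all fixed u > 0 and v > 0, the map t ↦ F(tu, tv)/tⁿ is nondecreasing on (0, ∞). -/
/-- If `F : ℝ² → ℝ` is `C¹`, nonnegative, and satisfies
`t ∂F/∂t(t,s) ≥ n F(t,s)` and `s ∂F/∂s(t,s) ≥ n F(t,s)` for `t, s > 0`, then for fixed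
`u, v > 0` the map `t ↦ F(tu, tv)/tⁿ` is nondecreasing on `(0, ∞)`. -/
theorem monotone_fibering_map
    (n : ℕ) (hn : 1 ≤ n) (F : ℝ × ℝ → ℝ)
    (hF : ContDiff ℝ 1 F) (hFnonneg : ∀ p : ℝ × ℝ, 0 ≤ F p)
    (hF1 : ∀ t s : ℝ, 0 < t → 0 < s →
      (n : ℝ) * F (t, s) ≤ t * fderiv ℝ F (t, s) (1, 0))
    (hF2 : ∀ t s : ℝ, 0 < t → 0 < s →
      (n : ℝ) * F (t, s) ≤ s * fderiv ℝ F (t, s) (0, 1)) :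
    ∀ u v : ℝ, 0 < u → 0 < v →
      MonotoneOn (fun t : ℝ => F (t * u, t * v) / t ^ n) (Set.Ioi 0) := by
  intro u v hu hv
  have hFd : Differentiable ℝ F := hF.differentiable one_ne_zero
  have key : ∀ t : ℝ, 0 < t → HasDerivAt (fun t : ℝ => F (t * u, t * v) / t ^ n)
      ((fderiv ℝ F (t * u, t * v) (u, v) * t ^ n -
        F (t * u, t * v) * ((n : ℝ) * t ^ (n - 1))) / (t ^ n) ^ 2) t := by
    intro t ht
    have h1 : HasDerivAt (fun t : ℝ => ((t * u, t * v) : ℝ × ℝ)) (u, v) t :=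
      HasDerivAt.prodMk (hasDerivAt_mul_const u) (hasDerivAt_mul_const v)
    have h2 : HasDerivAt (fun t : ℝ => F (t * u, t * v))
        (fderiv ℝ F (t * u, t * v) (u, v)) t :=
      (hFd (t * u, t * v)).hasFDerivAt.comp_hasDerivAt t h1
    exact h2.div (hasDerivAt_pow n t) (pow_ne_zero n ht.ne')
  have hIoi : interior (Set.Ioi (0 : ℝ)) = Set.Ioi 0 := interior_Ioi
  apply monotoneOn_of_deriv_nonneg (convex_Ioi 0)
  · exact fun t ht => ((key t ht).continuousAt).continuousWithinAt
  · rw [hIoi]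
    exact fun t ht => ((key t ht).differentiableAt).differentiableWithinAt
  · rw [hIoi]
    intro t ht
    rw [(key t ht).deriv]
    have htpos : (0 : ℝ) < t := ht
    have h1 := hF1 (t * u) (t * v) (mul_pos htpos hu) (mul_pos htpos hv)
    have h2 := hF2 (t * u) (t * v) (mul_pos htpos hu) (mul_pos htpos hv)
    have hsplit : fderiv ℝ F (t * u, t * v) (u, v)
        = u * fderiv ℝ F (t * u, t * v) (1, 0) + v * fderiv ℝ F (t * u, t * v) (0, 1) := by
      have huv : ((u, v) : ℝ × ℝ) = u • ((1, 0) : ℝ × ℝ) + v • ((0, 1) : ℝ × ℝ) := by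
        simp [Prod.ext_iff]
      rw [huv, map_add, map_smul, map_smul]
      simp
    have hF0 : 0 ≤ F (t * u, t * v) := hFnonneg _
    have hnF : 0 ≤ (n : ℝ) * F (t * u, t * v) := by positivity
    have htn : t ^ n = t ^ (n - 1) * t := by
      rw [← pow_succ, Nat.sub_add_cancel hn]
    have hpow : (0 : ℝ) ≤ t ^ (n - 1) := by positivity
    apply div_nonneg _ (sq_nonneg _)
    rw [hsplit, htn]
    nlinarith [mul_nonneg hpow hnF, mul_le_mul_of_nonneg_left h1 hpow,
      mul_le_mul_of_nonneg_left h2 hpow]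
end
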